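/- Let I ⊆ ℝ be an open interval, ξ : ℝ → ℝ, and W, Z : ℝ → ℂ be functions such that for every t ∈ I: Im(W t) > 0, Im(Z t) > 0, W t ≠ Z t, W has derivative 2/(W t − ξ t) at t, and Z has derivative 2/(Z t − ξ t) at t. Define G(t) := −(1/2π)·log|(W t − Z t)/(W t − conj(Z t))|, P_W(t) := −(1/π)·Im(1/(W t − ξ t)), and P_Z(t) := −(1/π)·Im(1/(Z t − ξ t)). Then for every t ∈ I, the function G has derivative −2π·P_W(t)·P_Z(t) at t. -/

import Mathlib

lemma hasDerivAt_log_abs {u : ℝ → ℂ} {u' : ℂ} {t : ℝ}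
    (hu : HasDerivAt u u' t) (h0 : u t ≠ 0) :
    HasDerivAt (fun s => Real.log ‖u s‖) ((u' / u t).re) t := by
  have hre : HasDerivAt (fun s => (u s).re) u'.re t :=
    (Complex.reCLM.hasFDerivAt.comp_hasDerivAt t hu)
  have him : HasDerivAt (fun s => (u s).im) u'.im t :=
    (Complex.imCLM.hasFDerivAt.comp_hasDerivAt t hu)
  have hn : HasDerivAt (fun s => Complex.normSq (u s))
      (2*(u t).re*u'.re + 2*(u t).im*u'.im) t := by
    have h := ((hre.mul hre).add (him.mul him) :
      HasDerivAt (fun s => (u s).re * (u s).re + (u s).im * (u s).im) _ t)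
    have heq : (fun s => (u s).re * (u s).re + (u s).im * (u s).im)
        = fun s => Complex.normSq (u s) := by
      funext s; simp [Complex.normSq_apply]
    rw [← heq]
    exact h.congr_deriv (by ring)
  have hn0 : Complex.normSq (u t) ≠ 0 := by
    simpa [Complex.normSq_eq_zero] using h0
  have hlog := ((Real.hasDerivAt_log hn0).comp t hn).div_const 2
  simp only [Function.comp_def] at hlog
  have heq2 : (fun s => Real.log (Complex.normSq (u s)) / 2)
      = fun s => Real.log ‖u s‖ := by
    funext s
    rw [Complex.norm_def, Real.log_sqrt (Complex.normSq_nonneg _)]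
  rw [heq2] at hlog
  refine hlog.congr_deriv ?_
  rw [Complex.div_re]
  field_simp

/-- Green function of the evolving domain in the half-plane chart:
`G(t) = -(1/2π)·log|(W t - Z t)/(W t - conj (Z t))|`. -/
noncomputable def GreenT (W Z : ℝ → ℂ) (t : ℝ) : ℝ :=
  -(1 / (2 * Real.pi)) *
    Real.log ‖(W t - Z t) / (W t - (starRingEnd ℂ) (Z t))‖

/-- Poisson kernel at the tip in the half-plane chart:
`P_W(t) = -(1/π)·Im(1/(W t - ξ t))`. -/
noncomputable def PoisT (ξ : ℝ → ℝ) (W : ℝ → ℂ) (t : ℝ) : ℝ :=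
  -(1 / Real.pi) * ((W t - (ξ t : ℂ))⁻¹).im

/-- **Hadamard's formula.** Let `I ⊆ ℝ` be an open interval,
`ξ : ℝ → ℝ`, and `W, Z : ℝ → ℂ` be such that for every `t ∈ I`: `Im(W t) > 0`,
`Im(Z t) > 0`, `W t ≠ Z t`, and `W`, `Z` satisfy the Loewner ODEs
`W' t = 2/(W t - ξ t)`, `Z' t = 2/(Z t - ξ t)`. Then for every `t ∈ I` the Green
function `G` has derivative `-2π·P_W(t)·P_Z(t)` at `t`. -/
theorem statement12 (I : Set ℝ) (hIopen : IsOpen I) (hIconn : I.OrdConnected)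
    (ξ : ℝ → ℝ) (W Z : ℝ → ℂ)
    (hW : ∀ t ∈ I, 0 < (W t).im) (hZ : ∀ t ∈ I, 0 < (Z t).im)
    (hWZ : ∀ t ∈ I, W t ≠ Z t)
    (hW' : ∀ t ∈ I, HasDerivAt W (2 / (W t - (ξ t : ℂ))) t)
    (hZ' : ∀ t ∈ I, HasDerivAt Z (2 / (Z t - (ξ t : ℂ))) t) :
    ∀ t ∈ I, HasDerivAt (GreenT W Z)
      (-(2 * Real.pi) * (PoisT ξ W t * PoisT ξ Z t)) t := by
  intro t ht
  have hWt := hW t ht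
  have hZt := hZ t ht
  have hWξ : W t - (ξ t : ℂ) ≠ 0 := by
    intro h
    have := congrArg Complex.im h
    simp at this; linarith
  have hZξ : Z t - (ξ t : ℂ) ≠ 0 := by
    intro h
    have := congrArg Complex.im h
    simp at this; linarith
  -- u1 = W - Z, u2 = W - conj Z
  have hu1 : HasDerivAt (fun s => W s - Z s)
      (2 / (W t - (ξ t : ℂ)) - 2 / (Z t - (ξ t : ℂ))) t :=
    (hW' t ht).sub (hZ' t ht)
  have hconjZ : HasDerivAt (fun s => (starRingEnd ℂ) (Z s))
      ((starRingEnd ℂ) (2 / (Z t - (ξ t : ℂ)))) t := by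
    exact (Complex.conjCLE.hasFDerivAt.comp_hasDerivAt t (hZ' t ht))
  have hu2 : HasDerivAt (fun s => W s - (starRingEnd ℂ) (Z s))
      (2 / (W t - (ξ t : ℂ)) - (starRingEnd ℂ) (2 / (Z t - (ξ t : ℂ)))) t :=
    (hW' t ht).sub hconjZ
  have h1ne : W t - Z t ≠ 0 := sub_ne_zero.mpr (hWZ t ht)
  have h2ne : W t - (starRingEnd ℂ) (Z t) ≠ 0 := by
    intro h
    have := congrArg Complex.im h
    simp [Complex.conj_im] at this; linarith
  have hl1 := hasDerivAt_log_abs hu1 h1ne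
  have hl2 := hasDerivAt_log_abs hu2 h2ne
  -- F s = -(1/(2π)) * (log |u1| - log |u2|)
  have hF := ((hl1.sub hl2).const_mul (-(1 / (2 * Real.pi))))
  -- GreenT =ᶠ F near t
  have hev : (fun s => -(1 / (2 * Real.pi)) *
        (Real.log ‖W s - Z s‖ -
          Real.log ‖W s - (starRingEnd ℂ) (Z s)‖))
      =ᶠ[nhds t] GreenT W Z := by
    have hc1 : ContinuousAt (fun s => W s - Z s) t := hu1.continuousAt
    have hc2 : ContinuousAt (fun s => W s - (starRingEnd ℂ) (Z s)) t := hu2.continuousAt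
    filter_upwards [hc1.eventually_ne h1ne, hc2.eventually_ne h2ne] with s hs1 hs2
    unfold GreenT
    rw [norm_div, Real.log_div (by simpa [sub_ne_zero] using hs1) (by simpa [sub_ne_zero] using hs2)]
  have hG := (hF.congr_of_eventuallyEq hev.symm)
  refine hG.congr_deriv ?_
  -- compute the derivative value
  have hconj2 : (starRingEnd ℂ) (2 / (Z t - (ξ t : ℂ)))
      = 2 / ((starRingEnd ℂ) (Z t) - (ξ t : ℂ)) := by
    rw [map_div₀, map_sub, Complex.conj_ofReal, map_ofNat]
  have hcZξ : (starRingEnd ℂ) (Z t) - (ξ t : ℂ) ≠ 0 := by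
    intro h
    have := congrArg Complex.im h
    simp [Complex.conj_im] at this; linarith
  have e1 : (2 / (W t - (ξ t : ℂ)) - 2 / (Z t - (ξ t : ℂ))) / (W t - Z t)
      = -2 * (W t - (ξ t : ℂ))⁻¹ * (Z t - (ξ t : ℂ))⁻¹ := by
    field_simp
    ring
  have e2 : (2 / (W t - (ξ t : ℂ)) - (starRingEnd ℂ) (2 / (Z t - (ξ t : ℂ)))) /
        (W t - (starRingEnd ℂ) (Z t))
      = -2 * (W t - (ξ t : ℂ))⁻¹ * ((starRingEnd ℂ) ((Z t - (ξ t : ℂ))⁻¹)) := by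
    rw [hconj2, map_inv₀, map_sub, Complex.conj_ofReal]
    field_simp
    ring
  rw [e1, e2]
  set a := (W t - (ξ t : ℂ))⁻¹
  set b := (Z t - (ξ t : ℂ))⁻¹
  unfold PoisT
  simp only [Complex.mul_re, Complex.mul_im, Complex.conj_re, Complex.conj_im,
    Complex.neg_re, Complex.neg_im, Complex.re_ofNat, Complex.im_ofNat]
  field_simp
  simp only [a, b, neg_add_eq_sub]
  rw [one_div, one_div]
  ring
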